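/- Let n ∈ ℕ, A, V ∈ ℂ^{n×n} with V invertible, ρ ∈ L¹(ℝ) ∩ L^∞(ℝ) nonnegative, and s ∈ (0,1). Then ∫_ℝ |det(A + rV)|^{-s/n} ρ(r) dr ≤ |det V|^{-s/n} ‖ρ‖_{L¹}^{1-s} ‖ρ‖_∞^{s} · 2^s s^{-s} / (1-s). -/

import Mathlib

open MeasureTheory

namespace DetAvgAux

open Polynomial intervalIntegral

lemma charpoly_eval' {m : Type*} [Fintype m] [DecidableEq m] (M : Matrix m m ℂ) (r : ℂ) :
    M.charpoly.eval r = (r • (1 : Matrix m m ℂ) - M).det := by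
  rw [Matrix.charpoly, _root_.eval_det, Matrix.matPolyEquiv_charmatrix]
  simp [Matrix.scalar, Matrix.smul_one_eq_diagonal, Pi.algebraMap_def]

lemma det_factor (n : ℕ) (hn : 0 < n) (A V : Matrix (Fin n) (Fin n) ℂ) (hV : IsUnit V.det) :
    ∃ x : Fin n → ℝ, ∀ r : ℝ,
      ‖V.det‖ * ∏ i, |r - x i| ≤ ‖(A + (r : ℂ) • V).det‖ := by
  set B := V⁻¹ * A with hB
  set p := Matrix.charpoly (-B) with hp
  have hmon : p.Monic := Matrix.charpoly_monic _
  have hsp : p.Splits := IsAlgClosed.splits p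
  have hdeg : p.natDegree = n := by
    rw [hp, Matrix.charpoly_natDegree_eq_dim, Fintype.card_fin]
  have hcard : p.roots.card = n := by
    rw [← hdeg, ← Polynomial.splits_iff_card_roots.mp hsp]
  set l := p.roots.toList with hl
  have hlen : l.length = n := by rw [hl, Multiset.length_toList, hcard]
  refine ⟨fun i => (l.get (Fin.cast hlen.symm i)).re, fun r => ?_⟩
  have hdet : (A + (r : ℂ) • V).det = V.det * (B + (r : ℂ) • 1).det := by
    rw [← Matrix.det_mul]
    congr 1
    rw [Matrix.mul_add, Matrix.mul_smul, Matrix.mul_one,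
      Matrix.mul_nonsing_inv_cancel_left _ _ hV]
  have heval : (B + (r : ℂ) • 1).det = p.eval (r : ℂ) := by
    rw [charpoly_eval']
    congr 1
    abel
  have hprodroots : p.eval (r : ℂ) = (p.roots.map fun ν => (r : ℂ) - ν).prod := by
    conv_lhs => rw [hsp.eq_prod_roots_of_monic hmon]
    rw [Polynomial.eval_multiset_prod, Multiset.map_map]
    simp
  have habs : ‖(A + (r : ℂ) • V).det‖
      = ‖V.det‖ * (p.roots.map fun ν => ‖(r : ℂ) - ν‖).prod := by
    rw [hdet, norm_mul, heval, hprodroots]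
    congr 1
    exact (map_multiset_prod (normHom (α := ℂ)) _).trans (by rw [Multiset.map_map]; rfl)
  rw [habs]
  apply mul_le_mul_of_nonneg_left _ (norm_nonneg _)
  have hlist : (p.roots.map fun ν => ‖(r : ℂ) - ν‖).prod
      = ∏ i : Fin n, ‖(r : ℂ) - l.get (Fin.cast hlen.symm i)‖ := by
    rw [← Multiset.coe_toList p.roots, ← hl, Multiset.map_coe, Multiset.prod_coe,
      ← List.ofFn_getElem_eq_map, List.prod_ofFn]
    exact (Equiv.prod_comp (finCongr hlen.symm) _).symm
  rw [hlist]
  apply Finset.prod_le_prod (fun i _ => abs_nonneg _) (fun i _ => ?_)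
  have := Complex.abs_re_le_norm ((r : ℂ) - l.get (Fin.cast hlen.symm i))
  simpa using this

lemma rpow_ball (s : ℝ) (hs0 : 0 < s) (hs1 : s < 1) (x lam : ℝ) (hlam : 0 < lam) :
    IntegrableOn (fun r => |r - x| ^ (-s)) (Set.Ioc (x - lam) (x + lam)) volume ∧
    ∫ r in Set.Ioc (x - lam) (x + lam), |r - x| ^ (-s) = 2 * lam ^ (1 - s) / (1 - s) := by
  have hexp : (-1 : ℝ) < -s := by linarith
  have h1 : IntervalIntegrable (fun t => |t| ^ (-s)) volume 0 lam := by
    rw [intervalIntegrable_iff_integrableOn_Ioc_of_le hlam.le]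
    refine ((intervalIntegrable_rpow' (a := 0) (b := lam) hexp).1).congr_fun
      (fun t ht => ?_) measurableSet_Ioc
    rw [abs_of_nonneg ht.1.le]
  have heven : (fun t : ℝ => |(-t)| ^ (-s)) = fun t : ℝ => |t| ^ (-s) := by
    funext t; rw [abs_neg]
  have h2 : IntervalIntegrable (fun t => |t| ^ (-s)) volume (-lam) 0 := by
    have := (IntervalIntegrable.iff_comp_neg (f := fun t : ℝ => |t| ^ (-s))
      (a := 0) (b := lam)).mp h1
    simp only [abs_neg, neg_zero] at this
    exact this.symm
  have h3 : IntervalIntegrable (fun t => |t| ^ (-s)) volume (-lam) lam := h2.trans h1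
  have h4 : IntervalIntegrable (fun r => |r - x| ^ (-s)) volume (x - lam) (x + lam) := by
    rw [show x - lam = -lam + x by ring, show x + lam = lam + x by ring]
    exact h3.comp_sub_right x
  have hIval : ∫ t in (0:ℝ)..lam, |t| ^ (-s) = lam ^ (1 - s) / (1 - s) := by
    rw [integral_congr (g := fun t => t ^ (-s)) (fun t ht => ?_), integral_rpow (Or.inl hexp)]
    · rw [Real.zero_rpow (by linarith : -s + 1 ≠ 0)]
      ring_nf
    · rw [Set.uIcc_of_le hlam.le] at ht
      simp [abs_of_nonneg ht.1]
  have hIval2 : ∫ t in (-lam:ℝ)..0, |t| ^ (-s) = lam ^ (1 - s) / (1 - s) := by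
    have := integral_comp_neg (a := -lam) (b := 0) (fun t : ℝ => |t| ^ (-s))
    simp only [abs_neg, neg_zero, neg_neg] at this
    rw [this, hIval]
  constructor
  · rw [← intervalIntegrable_iff_integrableOn_Ioc_of_le (by linarith)]
    exact h4
  · rw [← intervalIntegral.integral_of_le (by linarith : x - lam ≤ x + lam)]
    have hc := integral_comp_sub_right (a := x - lam) (b := x + lam)
      (fun t : ℝ => |t| ^ (-s)) x
    rw [hc, show x - lam - x = -lam by ring, show x + lam - x = lam by ring,
      ← integral_add_adjacent_intervals h2 h1, hIval, hIval2]
    ring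

lemma single_center (s : ℝ) (hs0 : 0 < s) (hs1 : s < 1) (ρ : ℝ → ℝ)
    (hρmeas : Measurable ρ) (hρint : Integrable ρ) (hρnonneg : ∀ r, 0 ≤ ρ r)
    (Cinf : ℝ) (hCinf : ∀ᵐ r ∂(volume : Measure ℝ), ρ r ≤ Cinf)
    (x lam : ℝ) (hlam : 0 < lam) :
    Integrable (fun r => |r - x| ^ (-s) * ρ r) ∧
    ∫ r, |r - x| ^ (-s) * ρ r
      ≤ lam ^ (-s) * (∫ r, ρ r) + Cinf * (2 * lam ^ (1 - s) / (1 - s)) := by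
  set S := Set.Ioc (x - lam) (x + lam) with hS
  have hSmeas : MeasurableSet S := measurableSet_Ioc
  obtain ⟨hint, hval⟩ := rpow_ball s hs0 hs1 x lam hlam
  have hfm : Measurable (fun r : ℝ => |r - x| ^ (-s) * ρ r) := by fun_prop
  have hrpow_nonneg : ∀ r : ℝ, 0 ≤ |r - x| ^ (-s) := fun r => Real.rpow_nonneg (abs_nonneg _) _
  -- bound outside S
  have houtS : ∀ r : ℝ, r ∉ S → |r - x| ^ (-s) ≤ lam ^ (-s) := by
    intro r hr
    have habs : lam ≤ |r - x| := by
      rw [hS, Set.mem_Ioc, not_and_or] at hr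
      rcases hr with hr | hr
      · push_neg at hr
        rw [abs_sub_comm, abs_of_nonneg (by linarith)]
        linarith
      · push_neg at hr
        rw [abs_of_nonneg (by linarith)]
        linarith
    exact Real.rpow_le_rpow_of_nonpos hlam habs (by linarith)
  -- integrability on S
  have hfS : IntegrableOn (fun r : ℝ => |r - x| ^ (-s) * ρ r) S := by
    refine Integrable.mono (hint.mul_const Cinf) hfm.aestronglyMeasurable ?_
    filter_upwards [ae_restrict_of_ae hCinf] with r hr
    rw [Real.norm_eq_abs, Real.norm_eq_abs, abs_mul, abs_of_nonneg (hrpow_nonneg r),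
      abs_of_nonneg (hρnonneg r)]
    have hC0 : 0 ≤ Cinf := le_trans (hρnonneg r) hr
    rw [abs_of_nonneg (mul_nonneg (hrpow_nonneg r) hC0)]
    exact mul_le_mul_of_nonneg_left hr (hrpow_nonneg r)
  -- integrability on Sᶜ
  have hfSc : IntegrableOn (fun r : ℝ => |r - x| ^ (-s) * ρ r) Sᶜ := by
    refine Integrable.mono ((hρint.const_mul (lam ^ (-s))).integrableOn)
      hfm.aestronglyMeasurable ?_
    rw [ae_restrict_iff' hSmeas.compl]
    filter_upwards with r hr
    rw [Real.norm_eq_abs, Real.norm_eq_abs, abs_mul, abs_of_nonneg (hrpow_nonneg r),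
      abs_of_nonneg (hρnonneg r), abs_mul, abs_of_nonneg (hρnonneg r),
      abs_of_nonneg (Real.rpow_nonneg hlam.le _)]
    exact mul_le_mul_of_nonneg_right (houtS r hr) (hρnonneg r)
  have hfint : Integrable (fun r : ℝ => |r - x| ^ (-s) * ρ r) := by
    rw [← integrableOn_univ, ← Set.union_compl_self S]
    exact hfS.union hfSc
  refine ⟨hfint, ?_⟩
  rw [← integral_add_compl hSmeas hfint]
  have hC0 : 0 ≤ Cinf := by
    obtain ⟨r, hr⟩ := hCinf.exists
    exact le_trans (hρnonneg r) hr
  have h1 : ∫ r in S, |r - x| ^ (-s) * ρ r ≤ Cinf * (2 * lam ^ (1 - s) / (1 - s)) := by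
    have : ∫ r in S, |r - x| ^ (-s) * ρ r ≤ ∫ r in S, |r - x| ^ (-s) * Cinf := by
      refine integral_mono_ae hfS (hint.mul_const Cinf) ?_
      filter_upwards [ae_restrict_of_ae hCinf] with r hr
      exact mul_le_mul_of_nonneg_left hr (hrpow_nonneg r)
    calc ∫ r in S, |r - x| ^ (-s) * ρ r ≤ ∫ r in S, |r - x| ^ (-s) * Cinf := this
      _ = (∫ r in S, |r - x| ^ (-s)) * Cinf := by rw [MeasureTheory.integral_mul_const]
      _ = Cinf * (2 * lam ^ (1 - s) / (1 - s)) := by rw [hval]; ring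
  have h2 : ∫ r in Sᶜ, |r - x| ^ (-s) * ρ r ≤ lam ^ (-s) * ∫ r, ρ r := by
    calc ∫ r in Sᶜ, |r - x| ^ (-s) * ρ r ≤ ∫ r in Sᶜ, lam ^ (-s) * ρ r := by
          refine integral_mono_ae hfSc ((hρint.const_mul _).integrableOn) ?_
          exact (ae_restrict_iff' hSmeas.compl).mpr (Filter.Eventually.of_forall
            fun r hr => mul_le_mul_of_nonneg_right (houtS r hr) (hρnonneg r))
      _ = lam ^ (-s) * ∫ r in Sᶜ, ρ r := by rw [MeasureTheory.integral_const_mul]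
      _ ≤ lam ^ (-s) * ∫ r, ρ r := by
          refine mul_le_mul_of_nonneg_left ?_ (Real.rpow_nonneg hlam.le _)
          exact setIntegral_le_integral hρint (Filter.Eventually.of_forall hρnonneg)
  linarith

end DetAvgAux

open DetAvgAux Polynomial intervalIntegral in
theorem determinant_averaging_bound_optimized
    (n : ℕ) (hn : 0 < n) (A V : Matrix (Fin n) (Fin n) ℂ) (hV : IsUnit V.det)
    (ρ : ℝ → ℝ) (hρmeas : Measurable ρ) (hρint : Integrable ρ)
    (hρnonneg : ∀ r, 0 ≤ ρ r) (Cinf : ℝ)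
    (hCinf : ∀ᵐ r ∂(volume : Measure ℝ), ρ r ≤ Cinf)
    (s : ℝ) (hs : s ∈ Set.Ioo (0:ℝ) 1) :
    ∫ r : ℝ, ‖(A + (r : ℂ) • V).det‖ ^ (-(s / (n : ℝ))) * ρ r
      ≤ ‖V.det‖ ^ (-(s / (n : ℝ))) *
        ((∫ r : ℝ, ρ r) ^ (1 - s) * Cinf ^ s * (2 ^ s * s ^ (-s) / (1 - s))) := by
  obtain ⟨hs0, hs1⟩ := hs
  have h1s : (0:ℝ) < 1 - s := by linarith
  have hnR : (0:ℝ) < (n : ℝ) := by exact_mod_cast hn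
  have hVpos : 0 < ‖V.det‖ :=
    norm_pos_iff.mpr (by simpa [isUnit_iff_ne_zero] using hV)
  set cV : ℝ := ‖V.det‖ ^ (-(s / (n : ℝ))) with hcV
  have hcV0 : 0 ≤ cV := Real.rpow_nonneg hVpos.le _
  have hC0 : 0 ≤ Cinf := by
    obtain ⟨r, hr⟩ := hCinf.exists
    exact le_trans (hρnonneg r) hr
  set I : ℝ := ∫ r : ℝ, ρ r with hI
  have hI0 : 0 ≤ I := integral_nonneg hρnonneg
  have hfnonneg : ∀ r : ℝ,
      0 ≤ ‖(A + (r : ℂ) • V).det‖ ^ (-(s / (n : ℝ))) * ρ r :=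
    fun r => mul_nonneg (Real.rpow_nonneg (norm_nonneg _) _) (hρnonneg r)
  have hD0 : 0 ≤ 2 ^ s * s ^ (-s) / (1 - s) := by positivity
  -- degenerate cases
  by_cases hdeg : Cinf = 0 ∨ I = 0
  · have hρ0 : ρ =ᵐ[volume] 0 := by
      rcases hdeg with h | h
      · filter_upwards [hCinf] with r hr
        exact le_antisymm (by simpa [h] using hr) (hρnonneg r)
      · exact (integral_eq_zero_iff_of_nonneg hρnonneg hρint).mp h
    have hL : (∫ r : ℝ, ‖(A + (r : ℂ) • V).det‖ ^ (-(s / (n : ℝ))) * ρ r) = 0 := by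
      rw [← integral_zero ℝ ℝ]
      apply MeasureTheory.integral_congr_ae
      filter_upwards [hρ0] with r hr
      simp [hr]
    rw [hL]
    have : 0 ≤ I ^ (1 - s) * Cinf ^ s * (2 ^ s * s ^ (-s) / (1 - s)) :=
      mul_nonneg (mul_nonneg (Real.rpow_nonneg hI0 _) (Real.rpow_nonneg hC0 _)) hD0
    exact mul_nonneg hcV0 this
  push_neg at hdeg
  obtain ⟨hCne, hIne⟩ := hdeg
  have hCpos : 0 < Cinf := lt_of_le_of_ne hC0 (Ne.symm hCne)
  have hIpos : 0 < I := lt_of_le_of_ne hI0 (Ne.symm hIne)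
  set lam : ℝ := s * I / (2 * Cinf) with hlam_def
  have hlam : 0 < lam := by positivity
  obtain ⟨x, hx⟩ := det_factor n hn A V hV
  -- the dominating function
  set g : ℝ → ℝ := fun r => cV * (n : ℝ)⁻¹ * ∑ i : Fin n, (|r - x i| ^ (-s) * ρ r) with hg
  have hsc := fun i : Fin n =>
    single_center s hs0 hs1 ρ hρmeas hρint hρnonneg Cinf hCinf (x i) lam hlam
  have hgint : Integrable g :=
    (integrable_finset_sum Finset.univ (fun i _ => (hsc i).1)).const_mul _
  -- a.e. pointwise bound
  have hae : ∀ᵐ r : ℝ, ∀ i : Fin n, r ≠ x i := by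
    have hnull : volume (⋃ i : Fin n, {x i}) = 0 :=
      measure_iUnion_null fun i => measure_singleton _
    have := measure_eq_zero_iff_ae_notMem.mp hnull
    filter_upwards [this] with r hr i hri
    exact hr (Set.mem_iUnion.mpr ⟨i, by simp [hri]⟩)
  have hptwise : ∀ᵐ r : ℝ,
      ‖(A + (r : ℂ) • V).det‖ ^ (-(s / (n : ℝ))) * ρ r ≤ g r := by
    filter_upwards [hae] with r hr
    have hfac : ∀ i : Fin n, 0 < |r - x i| := fun i => abs_pos.mpr (sub_ne_zero.mpr (hr i))
    have hP : 0 < ∏ i : Fin n, |r - x i| := Finset.prod_pos fun i _ => hfac i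
    have hz0 : ∀ i : Fin n, 0 ≤ |r - x i| ^ (-s) :=
      fun i => Real.rpow_nonneg (abs_nonneg _) _
    have step1 : ‖(A + (r : ℂ) • V).det‖ ^ (-(s / (n : ℝ)))
        ≤ (‖V.det‖ * ∏ i : Fin n, |r - x i|) ^ (-(s / (n : ℝ))) :=
      Real.rpow_le_rpow_of_nonpos (mul_pos hVpos hP) (hx r)
        (neg_nonpos.mpr (div_nonneg hs0.le hnR.le))
    have step2 : (‖V.det‖ * ∏ i : Fin n, |r - x i|) ^ (-(s / (n : ℝ)))
        = cV * (∏ i : Fin n, |r - x i|) ^ (-(s / (n : ℝ))) :=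
      Real.mul_rpow hVpos.le hP.le
    have step3 : (∏ i : Fin n, |r - x i|) ^ (-(s / (n : ℝ)))
        = ∏ i : Fin n, (|r - x i| ^ (-s)) ^ ((n : ℝ)⁻¹) := by
      rw [← Real.finset_prod_rpow Finset.univ _ (fun i _ => abs_nonneg _) _]
      refine Finset.prod_congr rfl fun i _ => ?_
      rw [← Real.rpow_mul (abs_nonneg _)]
      congr 1
      ring
    have amgm : ∏ i : Fin n, (|r - x i| ^ (-s)) ^ ((n : ℝ)⁻¹)
        ≤ ∑ i : Fin n, (n : ℝ)⁻¹ * (|r - x i| ^ (-s)) := by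
      refine Real.geom_mean_le_arith_mean_weighted Finset.univ
        (fun _ => (n : ℝ)⁻¹) (fun i => |r - x i| ^ (-s))
        (fun i _ => by positivity) ?_ (fun i _ => hz0 i)
      rw [Finset.sum_const, Finset.card_univ, Fintype.card_fin, nsmul_eq_mul]
      field_simp
    calc ‖(A + (r : ℂ) • V).det‖ ^ (-(s / (n : ℝ))) * ρ r
        ≤ (cV * ∏ i : Fin n, (|r - x i| ^ (-s)) ^ ((n : ℝ)⁻¹)) * ρ r := by
          refine mul_le_mul_of_nonneg_right ?_ (hρnonneg r)
          rw [← step3, ← step2]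
          exact step1
      _ ≤ (cV * ∑ i : Fin n, (n : ℝ)⁻¹ * (|r - x i| ^ (-s))) * ρ r := by
          refine mul_le_mul_of_nonneg_right
            (mul_le_mul_of_nonneg_left amgm hcV0) (hρnonneg r)
      _ = g r := by
          rw [hg]
          simp only [← Finset.mul_sum, Finset.mul_sum]
          rw [Finset.sum_mul]
          refine congrArg (Finset.sum Finset.univ) ?_
          funext i
          ring
  -- integral bound
  have hB := fun i : Fin n => (hsc i).2
  have hmain : (∫ r : ℝ, ‖(A + (r : ℂ) • V).det‖ ^ (-(s / (n : ℝ))) * ρ r)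
      ≤ cV * (lam ^ (-s) * I + Cinf * (2 * lam ^ (1 - s) / (1 - s))) := by
    calc (∫ r : ℝ, ‖(A + (r : ℂ) • V).det‖ ^ (-(s / (n : ℝ))) * ρ r)
        ≤ ∫ r : ℝ, g r :=
          integral_mono_of_nonneg (Filter.Eventually.of_forall hfnonneg) hgint hptwise
      _ = cV * (n : ℝ)⁻¹ * ∑ i : Fin n, ∫ r : ℝ, |r - x i| ^ (-s) * ρ r := by
          rw [hg, MeasureTheory.integral_const_mul, integral_finset_sum _ (fun i _ => (hsc i).1)]
      _ ≤ cV * (n : ℝ)⁻¹ *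
          ∑ _i : Fin n, (lam ^ (-s) * I + Cinf * (2 * lam ^ (1 - s) / (1 - s))) := by
          refine mul_le_mul_of_nonneg_left (Finset.sum_le_sum fun i _ => hB i) ?_
          positivity
      _ = cV * (lam ^ (-s) * I + Cinf * (2 * lam ^ (1 - s) / (1 - s))) := by
          rw [Finset.sum_const, Finset.card_univ, Fintype.card_fin, nsmul_eq_mul]
          field_simp
  refine hmain.trans (le_of_eq ?_)
  congr 1
  have e1 : lam ^ (1 - s) = lam * lam ^ (-s) := by
    rw [show (1:ℝ) - s = -s + 1 by ring, Real.rpow_add_one hlam.ne']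
    ring
  have e2 : lam ^ (-s) = 2 ^ s * Cinf ^ s * (s ^ (-s) * I ^ (-s)) := by
    rw [hlam_def, Real.div_rpow (by positivity) (by positivity),
      Real.mul_rpow hs0.le hI0, Real.mul_rpow (by norm_num) hC0,
      Real.rpow_neg (by norm_num : (0:ℝ) ≤ 2), Real.rpow_neg hC0]
    have h2s : (0:ℝ) < 2 ^ s := Real.rpow_pos_of_pos (by norm_num) _
    have hCs : (0:ℝ) < Cinf ^ s := Real.rpow_pos_of_pos hCpos _
    field_simp
  have e3 : I ^ (1 - s) = I ^ (-s) * I := by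
    rw [show (1:ℝ) - s = -s + 1 by ring, Real.rpow_add_one hIpos.ne']
  rw [e1, e2, e3, hlam_def]
  field_simp
  ring
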